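/- arXiv:2511.00473 — 4 statements merged into one kernel-verified Lean document; each statement's English description precedes it below -/
import Mathlib

section
/- In the formal power series ring Q[[t]], there exists a unique power series s(t) satisfying t·(1 − exp(t))·s(t) = t·exp(t) + 1 − exp(t), and this power series satisfies s(t) + s(−t) = −1. (Informally, s(t) = e^t/(1−e^t) + 1/t, and s(t) + 1/2 is an odd power series.) -/
open PowerSeries

lemma aux_ne : (X * (1 - exp ℚ) : PowerSeries ℚ) ≠ 0 := by
  intro h
  rcases mul_eq_zero.mp h with h | h
  · exact X_ne_zero h
  · have := congrArg (PowerSeries.coeff (R := ℚ) 1) h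
    simp [PowerSeries.coeff_exp] at this

/-- In `ℚ⟦t⟧` there is a unique power series `s` with
`t·(1 − exp t)·s = t·exp t + 1 − exp t` (informally `s(t) = e^t/(1−e^t) + 1/t`),
and any such `s` satisfies `s(t) + s(−t) = −1`. -/
theorem stmt1 :
    (∃! s : PowerSeries ℚ,
      X * (1 - exp ℚ) * s = X * exp ℚ + 1 - exp ℚ) ∧
    (∀ s : PowerSeries ℚ,
      X * (1 - exp ℚ) * s = X * exp ℚ + 1 - exp ℚ →
      s + rescale (-1 : ℚ) s = -1) := by
  constructor
  · -- existence and uniqueness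
    have hdvd : (X : PowerSeries ℚ) ∣ (1 - bernoulli'PowerSeries ℚ) := by
      rw [PowerSeries.X_dvd_iff]
      simp [bernoulli'PowerSeries, constantCoeff_mk]
    obtain ⟨s, hs⟩ := hdvd
    refine ⟨s, ?_, ?_⟩
    · show X * (1 - exp ℚ) * s = X * exp ℚ + 1 - exp ℚ
      have hB := bernoulli'PowerSeries_mul_exp_sub_one ℚ
      have : X * (1 - exp ℚ) * s = (1 - exp ℚ) * (1 - bernoulli'PowerSeries ℚ) := by
        rw [hs]; ring
      rw [this]
      have : (1 - exp ℚ) * (1 - bernoulli'PowerSeries ℚ)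
          = 1 - exp ℚ - bernoulli'PowerSeries ℚ + bernoulli'PowerSeries ℚ * (exp ℚ - 1)
            + bernoulli'PowerSeries ℚ := by ring
      rw [this, hB]; ring
    · intro y hy
      have hx : X * (1 - exp ℚ) * y = X * (1 - exp ℚ) * s := by
        rw [hy]
        have hB := bernoulli'PowerSeries_mul_exp_sub_one ℚ
        have : X * (1 - exp ℚ) * s = (1 - exp ℚ) * (1 - bernoulli'PowerSeries ℚ) := by
          rw [hs]; ring
        rw [this]
        have : (1 - exp ℚ) * (1 - bernoulli'PowerSeries ℚ)
            = 1 - exp ℚ - bernoulli'PowerSeries ℚ + bernoulli'PowerSeries ℚ * (exp ℚ - 1)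
              + bernoulli'PowerSeries ℚ := by ring
        rw [this, hB]; ring
      exact mul_left_cancel₀ aux_ne hx
  · intro s hs
    -- apply rescale (-1) to the equation
    have h2 := congrArg (rescale (-1 : ℚ)) hs
    simp only [map_mul, map_add, map_sub, map_one, rescale_neg_one_X] at h2
    set E := rescale (-1 : ℚ) (exp ℚ) with hE
    set s' := rescale (-1 : ℚ) s with hs'
    have hEE : exp ℚ * E = 1 := exp_mul_exp_neg_eq_one (A := ℚ)
    -- h2 : -X * (1 - E) * s' = -X * E + 1 - E
    have h3 : X * (1 - exp ℚ) * s' = -(X + 1 - exp ℚ) := by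
      have := congrArg (· * exp ℚ) h2
      have hexp : (-X * (1 - E) * s') * exp ℚ = -X * (exp ℚ - exp ℚ * E) * s' := by ring
      rw [hexp] at this
      rw [hEE] at this
      have hrhs : (-X * E + 1 - E) * exp ℚ = -X * (exp ℚ * E) + exp ℚ - exp ℚ * E := by ring
      rw [hrhs, hEE] at this
      calc X * (1 - exp ℚ) * s' = -X * (exp ℚ - 1) * s' := by ring
        _ = -X * 1 + exp ℚ - 1 := this
        _ = -(X + 1 - exp ℚ) := by ring
    have key : X * (1 - exp ℚ) * (s + s') = X * (1 - exp ℚ) * (-1) := by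
      have : X * (1 - exp ℚ) * (s + s') = X * (1 - exp ℚ) * s + X * (1 - exp ℚ) * s' := by
        ring
      rw [this, hs, h3]; ring
    exact mul_left_cancel₀ aux_ne key
end

section
/- Let G be a group, K a commutative ring, and I(G) the augmentation ideal of K[G]. Then for every element c of the commutator subgroup [G,G] of G, the element c − 1 lies in I(G)². -/
private lemma aux_comm {R : Type*} [Ring R] (A B D : R) (h : D * (B * A) = 1) :
    D * (A * B) - 1 = D * ((A - 1) * (B - 1) - (B - 1) * (A - 1)) := by
  have h' : D * ((A - 1) * (B - 1) - (B - 1) * (A - 1)) = D * (A * B) - D * (B * A) := by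
    noncomm_ring
  rw [h', h]

private lemma aux_mul {R : Type*} [Ring R] (A B : R) :
    A * B - 1 = (A - 1) * (B - 1) + (A - 1) + (B - 1) := by noncomm_ring

private lemma aux_inv {R : Type*} [Ring R] (A B : R) (h : B * A = 1) :
    B - 1 = -(B * (A - 1)) := by rw [mul_sub, h]; noncomm_ring

open scoped commutatorElement in
private lemma aux_main {R G : Type*} [Ring R] [Group G] (φ : G →* R) (I : Ideal R)
    (hmem : ∀ g : G, φ g - 1 ∈ I) (c : G) (hc : c ∈ commutator G) :
    φ c - 1 ∈ I * I := by
  rw [commutator_eq_closure] at hc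
  induction hc using Subgroup.closure_induction with
  | mem x hx =>
    obtain ⟨a, b, rfl⟩ := hx
    have h1 : φ ⁅a, b⁆ = φ (a * b) * (φ a⁻¹ * φ b⁻¹) := by
      rw [← map_mul, ← map_mul]
      congr 1
      simp [commutatorElement_def, mul_assoc]
    have h2 : φ (a * b) * (φ b⁻¹ * φ a⁻¹) = 1 := by
      rw [← map_mul, ← map_mul, ← map_one φ]
      congr 1
      group
    rw [h1, aux_comm _ _ _ h2]
    exact Ideal.mul_mem_left _ _
      (Ideal.sub_mem _ (Ideal.mul_mem_mul (hmem a⁻¹) (hmem b⁻¹))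
        (Ideal.mul_mem_mul (hmem b⁻¹) (hmem a⁻¹)))
  | one =>
    rw [map_one, sub_self]
    exact zero_mem _
  | mul x y _ _ hx hy =>
    rw [map_mul, aux_mul]
    exact Ideal.add_mem _ (Ideal.add_mem _ (Ideal.mul_mem_mul (hmem x) (hmem y)) hx) hy
  | inv x _ hx =>
    have h : φ x⁻¹ * φ x = 1 := by
      rw [← map_mul, ← map_one φ]
      congr 1
      group
    rw [aux_inv (φ x) _ h]
    exact neg_mem (Ideal.mul_mem_left _ _ hx)

/-- In the group algebra `K[G]` with augmentation ideal `I(G)`, for every element `c`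
of the commutator subgroup `[G,G]`, the element `c − 1` lies in `I(G)²`. -/
theorem stmt6 {K G : Type*} [CommRing K] [Group G] (c : G) (hc : c ∈ commutator G) :
    (MonoidAlgebra.of K G c : MonoidAlgebra K G) - 1
      ∈ (RingHom.ker ((MonoidAlgebra.lift K K G) 1 : MonoidAlgebra K G →ₐ[K] K)) ^ 2 := by
  rw [show (2 : ℕ) = 1 + 1 from rfl, Submodule.pow_succ, Submodule.pow_one]
  refine aux_main (MonoidAlgebra.of K G) _ (fun g => ?_) c hc
  simp [RingHom.mem_ker, map_sub]
end

section
/- Let G be a group with subgroups H and K, and let L ≤ K be a subgroup such that for all h ∈ H and k ∈ K, the element (h⁻¹kh)·k⁻¹ lies in L. Then in the group algebra K[G] (over a commutative ring), the product I(K)·I(H) is contained in the sum of K-submodules I(H)·I(K) + I(K)·I(L) + I(L), where for a subgroup S ≤ G, I(S) denotes the K-span of {s − 1 : s ∈ S}. -/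
open Pointwise


/-- For a subgroup `S ≤ G`, the `R`-submodule of `R[G]` spanned by the elements
`s − 1` for `s ∈ S`. -/
noncomputable def augSubmodule (R : Type*) {G : Type*} [CommRing R] [Group G] (S : Subgroup G) :
    Submodule R (MonoidAlgebra R G) :=
  Submodule.span R ((fun s : G => (MonoidAlgebra.of R G s : MonoidAlgebra R G) - 1) '' (S : Set G))

theorem mem_augSubmodule {R G : Type*} [CommRing R] [Group G] (S : Subgroup G) {s : G}
    (hs : s ∈ S) : (MonoidAlgebra.of R G s : MonoidAlgebra R G) - 1 ∈ augSubmodule R S :=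
  Submodule.subset_span ⟨s, hs, rfl⟩

/-- If `H, K, L` are subgroups of `G` with `L ≤ K` and `(h⁻¹kh)·k⁻¹ ∈ L` for all
`h ∈ H`, `k ∈ K`, then in the group algebra `R[G]` one has
`I(K)·I(H) ⊆ I(H)·I(K) + I(K)·I(L) + I(L)`. -/
theorem stmt12 {R G : Type*} [CommRing R] [Group G] (H Kk L : Subgroup G)
    (hLK : L ≤ Kk)
    (hcomm : ∀ h ∈ H, ∀ k ∈ Kk, (h⁻¹ * k * h) * k⁻¹ ∈ L) :
    augSubmodule R Kk * augSubmodule R H ≤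
      augSubmodule R H * augSubmodule R Kk + augSubmodule R Kk * augSubmodule R L
        + augSubmodule R L := by
  rw [show augSubmodule R Kk * augSubmodule R H =
      Submodule.span R
        (((fun s : G => (MonoidAlgebra.of R G s : MonoidAlgebra R G) - 1) '' (Kk : Set G)) *
         ((fun s : G => (MonoidAlgebra.of R G s : MonoidAlgebra R G) - 1) '' (H : Set G)))
    from Submodule.span_mul_span R _ _]
  apply Submodule.span_le.2
  rintro x ⟨_, ⟨k, hk, rfl⟩, _, ⟨h, hh, rfl⟩, rfl⟩
  have hlL : k⁻¹ * h⁻¹ * k * h ∈ L := by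
    have := hcomm h hh k⁻¹ (inv_mem hk)
    have h2 := inv_mem this
    simpa [mul_assoc] using h2
  have hkhK : h⁻¹ * k * h ∈ Kk := by
    have : h⁻¹ * k * h = k * (k⁻¹ * h⁻¹ * k * h) := by group
    rw [this]; exact mul_mem hk (hLK hlL)
  have e1 : (MonoidAlgebra.of R G h : MonoidAlgebra R G) * MonoidAlgebra.of R G (h⁻¹ * k * h)
      = MonoidAlgebra.of R G k * MonoidAlgebra.of R G h := by
    rw [← map_mul, ← map_mul]; congr 1; group
  have e2 : (MonoidAlgebra.of R G k : MonoidAlgebra R G) * MonoidAlgebra.of R G (k⁻¹ * h⁻¹ * k * h)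
      = MonoidAlgebra.of R G (h⁻¹ * k * h) := by
    rw [← map_mul]; congr 1; group
  have key : ((MonoidAlgebra.of R G k : MonoidAlgebra R G) - 1) * (MonoidAlgebra.of R G h - 1)
      = (MonoidAlgebra.of R G h - 1) * (MonoidAlgebra.of R G (h⁻¹ * k * h) - 1)
        + (MonoidAlgebra.of R G k - 1) * (MonoidAlgebra.of R G (k⁻¹ * h⁻¹ * k * h) - 1)
        + (MonoidAlgebra.of R G (k⁻¹ * h⁻¹ * k * h) - 1) := by
    have h0 : ((MonoidAlgebra.of R G k : MonoidAlgebra R G) - 1) * (MonoidAlgebra.of R G h - 1)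
        - ((MonoidAlgebra.of R G h - 1) * (MonoidAlgebra.of R G (h⁻¹ * k * h) - 1)
          + (MonoidAlgebra.of R G k - 1) * (MonoidAlgebra.of R G (k⁻¹ * h⁻¹ * k * h) - 1)
          + (MonoidAlgebra.of R G (k⁻¹ * h⁻¹ * k * h) - 1))
        = ((MonoidAlgebra.of R G k : MonoidAlgebra R G) * MonoidAlgebra.of R G h
            - MonoidAlgebra.of R G h * MonoidAlgebra.of R G (h⁻¹ * k * h))
          + (MonoidAlgebra.of R G (h⁻¹ * k * h)
            - MonoidAlgebra.of R G k * MonoidAlgebra.of R G (k⁻¹ * h⁻¹ * k * h)) := by noncomm_ring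
    have h1 : _ := h0
    rw [e1, e2, sub_self, sub_self, add_zero] at h1
    exact sub_eq_zero.1 h1
  simp only
  rw [key]
  refine Submodule.add_mem _ (Submodule.add_mem _ ?_ ?_) ?_
  · exact Submodule.mem_sup_left (Submodule.mem_sup_left
      (Submodule.mul_mem_mul (mem_augSubmodule H hh) (mem_augSubmodule Kk hkhK)))
  · exact Submodule.mem_sup_left (Submodule.mem_sup_right
      (Submodule.mul_mem_mul (mem_augSubmodule Kk hk) (mem_augSubmodule L hlL)))
  · exact Submodule.mem_sup_right (mem_augSubmodule L hlL)
end

section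
/- Let F be the free group on a set S, K a commutative ring, and fix a function v: S → K[F]. Then there exists a unique K-linear map d: K[F] → K[F] satisfying d(xy) = d(x)·ε(y) + x·d(y) for all x, y ∈ K[F], and d(s) = v(s) for all s ∈ S, where ε: K[F] → K is the augmentation. Moreover d(1) = 0 and d(s⁻¹) = −s⁻¹·v(s)·ε(s⁻¹) = −s⁻¹·v(s) for s ∈ S. -/
noncomputable section FoxAux
namespace FoxAux

variable {K S : Type*} [CommRing K]

abbrev A (K S : Type*) [CommRing K] := MonoidAlgebra K (FreeGroup S)

/-- Left multiplication action of the free group on the group algebra, as `MulAut` of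
`Multiplicative`. -/
def act (K S : Type*) [CommRing K] :
    FreeGroup S →* MulAut (Multiplicative (A K S)) where
  toFun g :=
    { toFun := fun m => Multiplicative.ofAdd (MonoidAlgebra.of K (FreeGroup S) g * m.toAdd)
      invFun := fun m => Multiplicative.ofAdd (MonoidAlgebra.of K (FreeGroup S) g⁻¹ * m.toAdd)
      left_inv := fun m => by
        simp only [toAdd_ofAdd, ← mul_assoc, ← map_mul, inv_mul_cancel,
          map_one, one_mul, ofAdd_toAdd]
      right_inv := fun m => by
        simp only [toAdd_ofAdd, ← mul_assoc, ← map_mul, mul_inv_cancel,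
          map_one, one_mul, ofAdd_toAdd]
      map_mul' := fun a b => by
        simp [mul_add] }
  map_one' := by
    refine MulEquiv.ext fun m => ?_
    show MonoidAlgebra.of K (FreeGroup S) 1 * m.toAdd = m.toAdd
    rw [map_one, one_mul]
  map_mul' g h := by
    refine MulEquiv.ext fun m => ?_
    show MonoidAlgebra.of K (FreeGroup S) (g * h) * m.toAdd
        = MonoidAlgebra.of K (FreeGroup S) g * (MonoidAlgebra.of K (FreeGroup S) h * m.toAdd)
    rw [map_mul, mul_assoc]

@[simp] lemma act_apply (g : FreeGroup S) (m : Multiplicative (A K S)) :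
    (act K S g m).toAdd = MonoidAlgebra.of K (FreeGroup S) g * m.toAdd := rfl

def Φ (v : S → A K S) : FreeGroup S →* (Multiplicative (A K S)) ⋊[act K S] FreeGroup S :=
  FreeGroup.lift fun s => ⟨Multiplicative.ofAdd (v s), FreeGroup.of s⟩

/-- The cocycle underlying the Fox derivative. -/
def φ (v : S → A K S) (g : FreeGroup S) : A K S := (Φ v g).left.toAdd

lemma φ_right (v : S → A K S) (g : FreeGroup S) : (Φ v g).right = g := by
  refine FreeGroup.induction_on g ?_ ?_ ?_ ?_
  · simp
  · intro s
    have h : (pure s : FreeGroup S) = FreeGroup.of s := rfl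
    rw [Φ, FreeGroup.lift_apply_of]
  · intro s ih
    rw [map_inv]
    simp_all
  · intro x y hx hy
    rw [map_mul, SemidirectProduct.mul_right, hx, hy]

lemma φ_one (v : S → A K S) : φ v 1 = 0 := by simp [φ]

lemma φ_of (v : S → A K S) (s : S) : φ v (FreeGroup.of s) = v s := by
  simp [φ, Φ]

lemma φ_mul (v : S → A K S) (g h : FreeGroup S) :
    φ v (g * h) = φ v g + MonoidAlgebra.of K (FreeGroup S) g * φ v h := by
  have : Φ v (g * h) = Φ v g * Φ v h := map_mul _ _ _
  have hl : (Φ v (g * h)).left = (Φ v g).left * act K S (Φ v g).right (Φ v h).left := by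
    rw [this]; rfl
  have := congrArg Multiplicative.toAdd hl
  simpa [φ, φ_right] using this

lemma φ_inv (v : S → A K S) (g : FreeGroup S) :
    φ v g⁻¹ = -(MonoidAlgebra.of K (FreeGroup S) g⁻¹ * φ v g) := by
  have h := φ_mul v g⁻¹ g
  simp only [inv_mul_cancel, φ_one] at h
  exact eq_neg_of_add_eq_zero_left h.symm

/-- The Fox derivative. -/
def d (v : S → A K S) : A K S →ₗ[K] A K S :=
  (Finsupp.lsum K fun g => LinearMap.toSpanSingleton K (A K S) (φ v g)) ∘ₗ
    (MonoidAlgebra.coeffLinearEquiv K).toLinearMap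

lemma d_single (v : S → A K S) (g : FreeGroup S) (k : K) :
    d v (MonoidAlgebra.single g k) = k • φ v g := Finsupp.lsum_single K _ _ _

lemma d_of (v : S → A K S) (g : FreeGroup S) :
    d v (MonoidAlgebra.of K (FreeGroup S) g) = φ v g := by
  simpa using d_single v g 1


lemma d_mul (v : S → A K S) (x y : A K S) :
    d v (x * y) = ((MonoidAlgebra.lift K K (FreeGroup S)) 1 y) • d v x + x * d v y := by
  induction x using MonoidAlgebra.induction_on with
  | of g =>
    induction y using MonoidAlgebra.induction_on with
    | of h =>
        rw [← map_mul, d_of, d_of, d_of, φ_mul, MonoidAlgebra.lift_of]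
        simp
    | add f₁ f₂ h₁ h₂ =>
        simp only [mul_add, map_add, h₁, h₂, add_smul]
        abel
    | smul r f hf =>
        simp only [map_smul, hf, smul_add, smul_smul, smul_eq_mul, mul_smul_comm]
  | add f₁ f₂ h₁ h₂ =>
      simp only [add_mul, map_add, h₁, h₂, smul_add]
      abel
  | smul r f hf =>
      simp only [smul_mul_assoc, map_smul, hf, smul_add, smul_comm r]

lemma d'_one (d' : A K S →ₗ[K] A K S)
    (hL : ∀ x y : A K S, d' (x * y) = ((MonoidAlgebra.lift K K (FreeGroup S)) 1 y) • d' x + x * d' y) :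
    d' 1 = 0 := by
  have h := hL 1 1
  rw [mul_one] at h
  have hε1 : ((MonoidAlgebra.lift K K (FreeGroup S)) 1 : A K S →ₐ[K] K) 1 = 1 := map_one _
  rw [hε1, one_smul, one_mul] at h
  exact right_eq_add.mp h

lemma d'_of_inv (d' : A K S →ₗ[K] A K S)
    (hL : ∀ x y : A K S, d' (x * y) = ((MonoidAlgebra.lift K K (FreeGroup S)) 1 y) • d' x + x * d' y)
    (g : FreeGroup S) :
    d' (MonoidAlgebra.of K (FreeGroup S) g⁻¹)
      = -(MonoidAlgebra.of K (FreeGroup S) g⁻¹ * d' (MonoidAlgebra.of K (FreeGroup S) g)) := by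
  have h := hL (MonoidAlgebra.of K (FreeGroup S) g⁻¹) (MonoidAlgebra.of K (FreeGroup S) g)
  rw [← map_mul, inv_mul_cancel, map_one, d'_one d' hL, MonoidAlgebra.lift_of] at h
  simp only [map_one, MonoidHom.one_apply, one_smul] at h
  exact eq_neg_of_add_eq_zero_left h.symm

lemma d'_eq (v : S → A K S) (d' : A K S →ₗ[K] A K S)
    (hL : ∀ x y : A K S, d' (x * y) = ((MonoidAlgebra.lift K K (FreeGroup S)) 1 y) • d' x + x * d' y)
    (hv : ∀ s : S, d' (MonoidAlgebra.of K (FreeGroup S) (FreeGroup.of s)) = v s) :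
    d' = d v := by
  have key : ∀ g : FreeGroup S, d' (MonoidAlgebra.of K (FreeGroup S) g) = φ v g := by
    intro g
    refine FreeGroup.induction_on g ?_ ?_ ?_ ?_
    · rw [map_one, d'_one d' hL, φ_one]
    · intro s
      have h : (pure s : FreeGroup S) = FreeGroup.of s := rfl
      rw [hv, φ_of]
    · intro s ih
      rw [d'_of_inv d' hL, ih, φ_inv]
    · intro x y hx hy
      rw [map_mul, hL, hx, hy, φ_mul, MonoidAlgebra.lift_of]
      simp
  refine MonoidAlgebra.lhom_ext' fun g => LinearMap.ext_ring ?_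
  show d' (MonoidAlgebra.of K (FreeGroup S) g) = d v (MonoidAlgebra.of K (FreeGroup S) g)
  rw [key, d_of]

end FoxAux
end FoxAux



/-- Fox derivatives on the group algebra of a free group: given values `v s` on the
free generators, there is a unique `K`-linear map `d : K[F(S)] → K[F(S)]` with
`d(xy) = ε(y) • d(x) + x·d(y)` and `d(of s) = v s`, where `ε` is the augmentation;
moreover any such `d` satisfies `d(1) = 0` and
`d(s⁻¹) = −s⁻¹·(v s)·ε(s⁻¹) = −s⁻¹·(v s)`. -/
theorem stmt15 {K S : Type*} [CommRing K] (v : S → MonoidAlgebra K (FreeGroup S)) :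
    letI ε : MonoidAlgebra K (FreeGroup S) →ₐ[K] K := (MonoidAlgebra.lift K K (FreeGroup S)) 1
    (∃! d : MonoidAlgebra K (FreeGroup S) →ₗ[K] MonoidAlgebra K (FreeGroup S),
      (∀ x y : MonoidAlgebra K (FreeGroup S), d (x * y) = ε y • d x + x * d y) ∧
      (∀ s : S, d (MonoidAlgebra.of K (FreeGroup S) (FreeGroup.of s)) = v s)) ∧
    (∀ d : MonoidAlgebra K (FreeGroup S) →ₗ[K] MonoidAlgebra K (FreeGroup S),
      (∀ x y : MonoidAlgebra K (FreeGroup S), d (x * y) = ε y • d x + x * d y) →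
      (∀ s : S, d (MonoidAlgebra.of K (FreeGroup S) (FreeGroup.of s)) = v s) →
      d 1 = 0 ∧
      ∀ s : S, d (MonoidAlgebra.of K (FreeGroup S) (FreeGroup.of s)⁻¹)
        = ε (MonoidAlgebra.of K (FreeGroup S) (FreeGroup.of s)⁻¹) •
            (-(MonoidAlgebra.of K (FreeGroup S) (FreeGroup.of s)⁻¹ * v s)) ∧
          d (MonoidAlgebra.of K (FreeGroup S) (FreeGroup.of s)⁻¹)
        = -(MonoidAlgebra.of K (FreeGroup S) (FreeGroup.of s)⁻¹ * v s)) := by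
  constructor
  · refine ⟨FoxAux.d v, ⟨?_, ?_⟩, ?_⟩
    · intro x y; exact FoxAux.d_mul v x y
    · intro s; rw [FoxAux.d_of, FoxAux.φ_of]
    · rintro d' ⟨hL, hv⟩
      exact FoxAux.d'_eq v d' hL hv
  · intro d' hL hv
    refine ⟨FoxAux.d'_one d' hL, fun s => ?_⟩
    have h := FoxAux.d'_of_inv d' hL (FreeGroup.of s)
    rw [hv] at h
    refine ⟨?_, h⟩
    rw [h, MonoidAlgebra.lift_of]
    simp
end
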